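/- Let p ∈ (1,2) and κ, K, C₀ > 0. Then there exists a constant C = C(p, κ, K, C₀) > 0 with the following property. Let Φ : ℝ → ℝ be twice differentiable with Φ ≥ 0, Φ'' ≥ 0, |Φ'(v)|² ≤ C₀ Φ''(v) Φ(v), |Φ'(v)| ≤ C₀ (Φ(v))^{(p−1)/p}, and |Φ'(v)·v| ≤ C₀ Φ(v) for all v ∈ ℝ. Let a be a real symmetric d×d matrix and σ a real d×k matrix with κ‖ξ‖² + ‖σᵀξ‖² ≤ 2⟨aξ, ξ⟩ ≤ K‖ξ‖² for all ξ ∈ ℝ^d, and let b ∈ ℝ^d, μ ∈ ℝ^k, c ∈ ℝ satisfy ‖b‖ ≤ K, ‖μ‖ ≤ K, |c| ≤ K. Then for all v, F ∈ ℝ, ξ ∈ ℝ^d and z ∈ ℝ^k: Φ''(v)·(⟨aξ, ξ⟩ + ⟨σᵀξ, z⟩ + ‖z‖²/2) − Φ'(v)·(⟨b, ξ⟩ + c·v + ⟨μ, z⟩ + F) ≥ −C·(Φ(v) + |F|^p). -/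

import Mathlib

open scoped RealInnerProductSpace

lemma amgm_aux {a m n t : ℝ} (ha : 0 ≤ a) (hm : 0 ≤ m) (hn : 0 ≤ n) (ht : 0 ≤ t)
    (h : a ^ 2 ≤ m * n) : a * t ≤ m * t ^ 2 / 2 + n / 2 := by
  nlinarith [sq_nonneg (m * t ^ 2 - n), mul_le_mul_of_nonneg_right h (sq_nonneg t),
    mul_nonneg ha ht, mul_nonneg hm (sq_nonneg t)]

lemma young_aux {p P G : ℝ} (hp1 : 1 < p) (hP : 0 ≤ P) (hG : 0 ≤ G) :
    P ^ ((p - 1) / p) * G ≤ P + G ^ p := by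
  have hp0 : (0:ℝ) < p := by linarith
  have hq : (Real.conjExponent p).HolderConjugate p :=
    (Real.HolderConjugate.conjExponent hp1).symm
  have h := Real.young_inequality_of_nonneg (Real.rpow_nonneg hP ((p-1)/p)) hG hq
  have hrw : (P ^ ((p - 1) / p)) ^ Real.conjExponent p = P := by
    rw [← Real.rpow_mul hP]
    have : (p - 1) / p * Real.conjExponent p = 1 := by
      have hne : p - 1 ≠ 0 := sub_ne_zero.mpr (ne_of_gt hp1)
      unfold Real.conjExponent
      field_simp
    rw [this, Real.rpow_one]
  rw [hrw] at h
  have h1 : P / Real.conjExponent p ≤ P := div_le_self hP hq.lt.le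
  have h2 : G ^ p / p ≤ G ^ p := div_le_self (Real.rpow_nonneg hG p) hp1.le
  linarith

set_option maxHeartbeats 1600000 in
theorem stmt_19 (p κ K C₀ : ℝ) (hp1 : 1 < p) (hp2 : p < 2)
    (hκ : 0 < κ) (hK : 0 < K) (hC₀ : 0 < C₀) (d k : ℕ) (hd : 1 ≤ d) (hk : 1 ≤ k) :
    ∃ C > (0 : ℝ),
      ∀ (Φ Φ' Φ'' : ℝ → ℝ),
        (∀ v : ℝ, HasDerivAt Φ (Φ' v) v) →
        (∀ v : ℝ, HasDerivAt Φ' (Φ'' v) v) →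
        (∀ v : ℝ, 0 ≤ Φ v) →
        (∀ v : ℝ, 0 ≤ Φ'' v) →
        (∀ v : ℝ, |Φ' v| ^ 2 ≤ C₀ * Φ'' v * Φ v) →
        (∀ v : ℝ, |Φ' v| ≤ C₀ * Φ v ^ ((p - 1) / p)) →
        (∀ v : ℝ, |Φ' v * v| ≤ C₀ * Φ v) →
      ∀ (a : Matrix (Fin d) (Fin d) ℝ), a.IsSymm →
      ∀ (σ : Matrix (Fin d) (Fin k) ℝ),
        (∀ ξ : EuclideanSpace ℝ (Fin d),
          κ * ‖ξ‖ ^ 2 + ‖Matrix.toEuclideanLin σ.transpose ξ‖ ^ 2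
            ≤ 2 * ⟪Matrix.toEuclideanLin a ξ, ξ⟫ ∧
          2 * ⟪Matrix.toEuclideanLin a ξ, ξ⟫ ≤ K * ‖ξ‖ ^ 2) →
      ∀ (b : EuclideanSpace ℝ (Fin d)) (μ : EuclideanSpace ℝ (Fin k)) (c : ℝ),
        ‖b‖ ≤ K → ‖μ‖ ≤ K → |c| ≤ K →
      ∀ (v F : ℝ) (ξ : EuclideanSpace ℝ (Fin d)) (z : EuclideanSpace ℝ (Fin k)),
        Φ'' v * (⟪Matrix.toEuclideanLin a ξ, ξ⟫
              + ⟪Matrix.toEuclideanLin σ.transpose ξ, z⟫ + ‖z‖ ^ 2 / 2)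
            - Φ' v * (⟪b, ξ⟫ + c * v + ⟪μ, z⟫ + F)
          ≥ -C * (Φ v + |F| ^ p) := by
  refine ⟨C₀*K^2/κ + 2*C₀*K^3/κ + C₀*K + C₀, by positivity, ?_⟩
  intro Φ Φ' Φ'' hΦd hΦd2 hΦ0 hΦ''0 hsq hpow hvbd a ha σ hσ b μ c hb hμ hc v F ξ z
  -- κ ≤ K
  have hκK : κ ≤ K := by
    have h0 := hσ (EuclideanSpace.single ⟨0, hd⟩ 1)
    have hn : ‖(EuclideanSpace.single (⟨0, hd⟩ : Fin d) (1:ℝ) : EuclideanSpace ℝ (Fin d))‖ = 1 := by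
      simp [EuclideanSpace.norm_single]
    rw [hn] at h0
    nlinarith [h0.1, h0.2,
      sq_nonneg ‖Matrix.toEuclideanLin σ.transpose (EuclideanSpace.single (⟨0, hd⟩ : Fin d) (1:ℝ))‖]
  set A : ℝ := ⟪Matrix.toEuclideanLin a ξ, ξ⟫ with hAdef
  set S : EuclideanSpace ℝ (Fin k) := Matrix.toEuclideanLin σ.transpose ξ with hSdef
  set x : ℝ := ‖ξ‖ with hxdef
  set w : ℝ := ‖z‖ with hwdef
  set s : ℝ := ‖S‖ with hsdef
  obtain ⟨hlo, hhi⟩ := hσ ξ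
  have hIcs : |⟪S, z⟫| ≤ s * w := abs_real_inner_le_norm S z
  have hIneg : -(s * w) ≤ ⟪S, z⟫ := neg_le_of_abs_le hIcs
  have hx0 : 0 ≤ x := norm_nonneg _
  have hw0 : 0 ≤ w := norm_nonneg _
  have hs0 : 0 ≤ s := norm_nonneg _
  -- key quadratic lower bound
  have hQ2 : 2*K*κ*x^2 + κ*w^2 ≤ 8*K*(A + ⟪S, z⟫ + w^2/2) := by
    nlinarith [hlo, hhi, hIneg, sq_nonneg (s - w), sq_nonneg (2*s - w),
      mul_nonneg hK.le (sq_nonneg (s-w)), mul_nonneg hκ.le (sq_nonneg (2*s-w)),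
      mul_nonneg (mul_nonneg hκ.le hκ.le) (sq_nonneg x),
      mul_nonneg (sub_nonneg.2 hκK) (sq_nonneg (s-w)),
      mul_nonneg hκ.le (sub_nonneg.2 hhi), mul_nonneg hκ.le (sub_nonneg.2 hlo),
      mul_nonneg hK.le (sub_nonneg.2 hlo), mul_nonneg hK.le (mul_nonneg hs0 hw0)]
  have h8K : (0:ℝ) < 8*K := by linarith
  have hQ : κ/4*x^2 + κ/(8*K)*w^2 ≤ A + ⟪S, z⟫ + w^2/2 := by
    have heq : κ/4*x^2 + κ/(8*K)*w^2 = (2*K*κ*x^2 + κ*w^2)/(8*K) := by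
      field_simp; ring
    rw [heq, div_le_iff₀ h8K]
    linarith [hQ2]
  have hE : 0 ≤ Φ'' v := hΦ''0 v
  have hP : 0 ≤ Φ v := hΦ0 v
  have hFp : 0 ≤ |F| ^ p := Real.rpow_nonneg (abs_nonneg F) p
  have h1 : Φ'' v * (κ/4*x^2 + κ/(8*K)*w^2) ≤ Φ'' v * (A + ⟪S, z⟫ + w^2/2) :=
    mul_le_mul_of_nonneg_left hQ hE
  -- bound on D * B
  have hB : |⟪b, ξ⟫| ≤ K * x := by
    calc |⟪b, ξ⟫| ≤ ‖b‖ * ‖ξ‖ := abs_real_inner_le_norm b ξ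
    _ ≤ K * x := mul_le_mul_of_nonneg_right hb hx0
  have hM : |⟪μ, z⟫| ≤ K * w := by
    calc |⟪μ, z⟫| ≤ ‖μ‖ * ‖z‖ := abs_real_inner_le_norm μ z
    _ ≤ K * w := mul_le_mul_of_nonneg_right hμ hw0
  have h2 : Φ' v * ⟪b, ξ⟫ ≤ K * |Φ' v| * x := by
    calc Φ' v * ⟪b, ξ⟫ ≤ |Φ' v * ⟪b, ξ⟫| := le_abs_self _
    _ = |Φ' v| * |⟪b, ξ⟫| := abs_mul _ _
    _ ≤ |Φ' v| * (K * x) := mul_le_mul_of_nonneg_left hB (abs_nonneg _)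
    _ = K * |Φ' v| * x := by ring
  have h2' : Φ' v * ⟪μ, z⟫ ≤ K * |Φ' v| * w := by
    calc Φ' v * ⟪μ, z⟫ ≤ |Φ' v * ⟪μ, z⟫| := le_abs_self _
    _ = |Φ' v| * |⟪μ, z⟫| := abs_mul _ _
    _ ≤ |Φ' v| * (K * w) := mul_le_mul_of_nonneg_left hM (abs_nonneg _)
    _ = K * |Φ' v| * w := by ring
  -- weighted Young for the ξ term
  have h3 : K * |Φ' v| * x ≤ (κ/2 * Φ'' v) * x^2/2 + (2*K^2*C₀/κ * Φ v)/2 := by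
    apply amgm_aux (by positivity) (by positivity) (by positivity) hx0
    have heq : (κ/2 * Φ'' v) * (2*K^2*C₀/κ * Φ v) = K^2 * (C₀ * Φ'' v * Φ v) := by
      field_simp
    rw [mul_pow, heq]
    have := mul_le_mul_of_nonneg_left (hsq v) (sq_nonneg K)
    linarith
  -- weighted Young for the z term
  have h5 : K * |Φ' v| * w ≤ (κ/(4*K) * Φ'' v) * w^2/2 + (4*K^3*C₀/κ * Φ v)/2 := by
    apply amgm_aux (by positivity) (by positivity) (by positivity) hw0
    have heq : (κ/(4*K) * Φ'' v) * (4*K^3*C₀/κ * Φ v) = K^2 * (C₀ * Φ'' v * Φ v) := by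
      field_simp
    rw [mul_pow, heq]
    have := mul_le_mul_of_nonneg_left (hsq v) (sq_nonneg K)
    linarith
  -- c·v term
  have h4 : Φ' v * (c * v) ≤ C₀ * K * Φ v := by
    calc Φ' v * (c * v) = (Φ' v * v) * c := by ring
    _ ≤ |(Φ' v * v) * c| := le_abs_self _
    _ = |Φ' v * v| * |c| := abs_mul _ _
    _ ≤ (C₀ * Φ v) * K := mul_le_mul (hvbd v) hc (abs_nonneg c) (by positivity)
    _ = C₀ * K * Φ v := by ring
  -- F term
  have h6 : Φ' v * F ≤ C₀ * (Φ v + |F| ^ p) := by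
    calc Φ' v * F ≤ |Φ' v * F| := le_abs_self _
    _ = |Φ' v| * |F| := abs_mul _ _
    _ ≤ (C₀ * Φ v ^ ((p-1)/p)) * |F| :=
        mul_le_mul_of_nonneg_right (hpow v) (abs_nonneg F)
    _ = C₀ * (Φ v ^ ((p-1)/p) * |F|) := by ring
    _ ≤ C₀ * (Φ v + |F| ^ p) :=
        mul_le_mul_of_nonneg_left (young_aux hp1 hP (abs_nonneg F)) hC₀.le
  have h5' : K * |Φ' v| * w ≤ κ/(8*K) * Φ'' v * w^2 + 2*K^3*C₀/κ * Φ v := by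
    have heq2 : κ/(4*K) * Φ'' v * w^2/2 + 4*K^3*C₀/κ * Φ v/2
        = κ/(8*K) * Φ'' v * w^2 + 2*K^3*C₀/κ * Φ v := by
      field_simp
      ring
    linarith [h5, le_of_eq heq2, le_of_eq heq2.symm]
  have hextra : 0 ≤ C₀*K^2/κ*|F|^p + 2*C₀*K^3/κ*|F|^p + C₀*K*|F|^p := by positivity
  ring_nf at h1 h2 h2' h3 h4 h5' h6 hextra ⊢
  linarith [h1, h2, h2', h3, h4, h5', h6, hP, hFp, hextra]
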